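/- Let n ≥ 2, let d_1, …, d_n be arbitrary real numbers, let β > 0 and c ≥ 0, and let λ_1, …, λ_n be independent random variables, each exponentially distributed with rate β. Set X_i = d_i − λ_i and m = min_i X_i. Then the probability that there exist indices i ≠ j with X_i ≤ m + c and X_j ≤ m + c (i.e., that the smallest and second-smallest of the values X_1, …, X_n are within c of each other) is at most β·c. -/

import Mathlib

open MeasureTheory ProbabilityTheory Set
open scoped ENNReal

private lemma mpx_ciInf_exists_min {ι : Type*} [Finite ι] [Nonempty ι] (f : ι → ℝ) :
    ∃ i₀, (⨅ i, f i) = f i₀ ∧ ∀ j, f i₀ ≤ f j := by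
  obtain ⟨i₀, hi₀⟩ := Finite.exists_min f
  exact ⟨i₀, le_antisymm (ciInf_le (Set.Finite.bddBelow (Set.finite_range f)) i₀)
    (le_ciInf hi₀), hi₀⟩

private lemma mpx_pi_unique {ι : Type*} [instF : Fintype ι] [Unique ι] {α : Type*} [MeasurableSpace α]
    (κ' : ι → Measure α) [∀ j, SigmaFinite (κ' j)] (T : Set α) :
    Measure.pi κ' {u | u default ∈ T} = κ' default T := by
  have h : {u : ι → α | u default ∈ T} = Set.pi Set.univ (fun _ => T) := by
    ext u
    simp only [Set.mem_setOf_eq, Set.mem_pi, Set.mem_univ, forall_true_left]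
    constructor
    · intro h j; rwa [Subsingleton.elim j default]
    · intro h; exact h default
  rw [h, Measure.pi_pi, Finset.univ_unique, Finset.prod_singleton]

private lemma mpx_fubini {n : ℕ} (κ : Fin n → Measure ℝ) [hpr : ∀ i, IsProbabilityMeasure (κ i)]
    (i : Fin n) (B : Set (ℝ × ({j : Fin n // ¬ j = i} → ℝ))) (hB : MeasurableSet B) :
    Measure.pi κ {x | (x i, fun j : {j : Fin n // ¬ j = i} => x (j : Fin n)) ∈ B}
      = ∫⁻ y, κ i {t | (t, y) ∈ B} ∂(Measure.pi fun j : {j : Fin n // ¬ j = i} => κ (j : Fin n)) := by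
  classical
  letI : Unique {j : Fin n // j = i} := ⟨⟨⟨i, rfl⟩⟩, fun j => Subtype.ext j.2⟩
  have h1 := measurePreserving_piEquivPiSubtypeProd (fun j : Fin n => κ j) (fun j => j = i)
  set B' : Set (({j : Fin n // j = i} → ℝ) × ({j : Fin n // ¬ j = i} → ℝ)) :=
    {z | (z.1 ⟨i, rfl⟩, z.2) ∈ B} with hB'def
  have hB' : MeasurableSet B' :=
    (Measurable.prodMk ((measurable_pi_apply _).comp measurable_fst) measurable_snd) hB
  have key := h1.measure_preimage (s := B') hB'.nullMeasurableSet
  have hpre : (MeasurableEquiv.piEquivPiSubtypeProd (fun _ : Fin n => ℝ) (fun j => j = i)) ⁻¹' B'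
      = {x | (x i, fun j : {j : Fin n // ¬ j = i} => x (j : Fin n)) ∈ B} := by
    ext x; exact Iff.rfl
  rw [hpre] at key
  rw [key, Measure.prod_apply_symm hB']
  refine lintegral_congr fun y => ?_
  have hset2 : ((fun u => (u, y)) ⁻¹' B')
      = {u : {j : Fin n // j = i} → ℝ | u default ∈ {t | (t, y) ∈ B}} := by
    ext u; exact Iff.rfl
  rw [hset2]
  have hgen : ∀ F : Fintype {j : Fin n // j = i},
      (@Measure.pi {j : Fin n // j = i} (fun _ => ℝ) F (fun _ => Real.measurableSpace)
        (fun j => κ (j : Fin n))) {u | u default ∈ {t | (t, y) ∈ B}}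
        = (κ i) {t | (t, y) ∈ B} := fun F =>
    mpx_pi_unique (instF := F) (fun j : {j : Fin n // j = i} => κ (j : Fin n)) {t | (t, y) ∈ B}
  exact hgen _

private lemma mpx_surv (β c : ℝ) (hβ : 0 < β) (hc : 0 ≤ c) (κ : Measure ℝ)
    [IsProbabilityMeasure κ]
    (hIoi : ∀ t : ℝ, 0 ≤ t → κ (Set.Ioi t) = ENNReal.ofReal (Real.exp (-β * t))) (a : ℝ) :
    ENNReal.ofReal (Real.exp (-β * c)) * κ (Set.Ici a) ≤ κ (Set.Ioi (a + c)) := by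
  have hIci : κ (Set.Ici a) ≤ ENNReal.ofReal (Real.exp (-β * (a ⊔ 0))) := by
    rcases le_or_gt a 0 with ha | ha
    · rw [sup_eq_right.mpr ha, mul_zero, Real.exp_zero, ENNReal.ofReal_one]
      exact prob_le_one
    · rw [sup_eq_left.mpr ha.le]
      have htend : Filter.Tendsto (fun s : ℝ => ENNReal.ofReal (Real.exp (-β * s)))
          (nhdsWithin a (Set.Iio a)) (nhds (ENNReal.ofReal (Real.exp (-β * a)))) := by
        apply Filter.Tendsto.mono_left _ nhdsWithin_le_nhds
        exact (ENNReal.continuous_ofReal.comp (by continuity)).continuousAt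
      refine ge_of_tendsto htend ?_
      filter_upwards [Ioo_mem_nhdsLT_of_mem (Set.mem_Ioc.mpr ⟨ha, le_refl a⟩)] with s hs
      calc κ (Set.Ici a) ≤ κ (Set.Ioi s) := measure_mono fun t ht => lt_of_lt_of_le hs.2 ht
        _ = ENNReal.ofReal (Real.exp (-β * s)) := hIoi s hs.1.le
  calc ENNReal.ofReal (Real.exp (-β * c)) * κ (Set.Ici a)
      ≤ ENNReal.ofReal (Real.exp (-β * c)) * ENNReal.ofReal (Real.exp (-β * (a ⊔ 0))) :=
        mul_le_mul_right hIci _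
    _ = ENNReal.ofReal (Real.exp (-β * (a ⊔ 0 + c))) := by
        rw [← ENNReal.ofReal_mul (Real.exp_nonneg _), ← Real.exp_add]; ring_nf
    _ = κ (Set.Ioi (a ⊔ 0 + c)) := (hIoi _ (add_nonneg le_sup_right hc)).symm
    _ ≤ κ (Set.Ioi (a + c)) :=
        measure_mono (Set.Ioi_subset_Ioi (by gcongr; exact le_sup_left))

private lemma mpx_E_measurable (n : ℕ) (d : Fin n → ℝ) (c : ℝ) :
    MeasurableSet {x : Fin n → ℝ | ∃ i j : Fin n, i ≠ j ∧
        d i - x i ≤ (⨅ l : Fin n, (d l - x l)) + c ∧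
        d j - x j ≤ (⨅ l : Fin n, (d l - x l)) + c} := by
  have hm : Measurable fun x : Fin n → ℝ => (⨅ l : Fin n, (d l - x l)) :=
    Measurable.iInf fun l => measurable_const.sub (measurable_pi_apply l)
  have : {x : Fin n → ℝ | ∃ i j : Fin n, i ≠ j ∧
        d i - x i ≤ (⨅ l : Fin n, (d l - x l)) + c ∧
        d j - x j ≤ (⨅ l : Fin n, (d l - x l)) + c}
      = ⋃ i, ⋃ j, ⋃ (_ : i ≠ j),
        ({x : Fin n → ℝ | d i - x i ≤ (⨅ l : Fin n, (d l - x l)) + c} ∩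
         {x : Fin n → ℝ | d j - x j ≤ (⨅ l : Fin n, (d l - x l)) + c}) := by
    ext x
    simp only [Set.mem_setOf_eq, Set.mem_iUnion, Set.mem_inter_iff]
    tauto
  rw [this]
  refine MeasurableSet.iUnion fun i => MeasurableSet.iUnion fun j =>
    MeasurableSet.iUnion fun _ => MeasurableSet.inter ?_ ?_ <;>
  exact measurableSet_le (measurable_const.sub (measurable_pi_apply _))
    (hm.add_const c)

private lemma mpx_pi (n : ℕ) (hn : 2 ≤ n) (d : Fin n → ℝ) (β c : ℝ) (hβ : 0 < β) (hc : 0 ≤ c)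
    (κ : Fin n → Measure ℝ) [hpr : ∀ i, IsProbabilityMeasure (κ i)]
    (hIoi : ∀ i, ∀ t : ℝ, 0 ≤ t → κ i (Set.Ioi t) = ENNReal.ofReal (Real.exp (-β * t))) :
    Measure.pi κ {x | ∃ i j : Fin n, i ≠ j ∧
        d i - x i ≤ (⨅ l : Fin n, (d l - x l)) + c ∧
        d j - x j ≤ (⨅ l : Fin n, (d l - x l)) + c} ≤ ENNReal.ofReal (β * c) := by
  classical
  haveI : Nontrivial (Fin n) :=
    ⟨⟨0, by omega⟩, ⟨1, by omega⟩, Fin.ne_of_val_ne (by norm_num)⟩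
  haveI hne : ∀ i : Fin n, Nonempty {j : Fin n // ¬ j = i} := fun i => by
    obtain ⟨j, hj⟩ := exists_ne i; exact ⟨⟨j, hj⟩⟩
  set ν := Measure.pi κ with hν
  set E : Set (Fin n → ℝ) := {x | ∃ i j : Fin n, i ≠ j ∧
        d i - x i ≤ (⨅ l : Fin n, (d l - x l)) + c ∧
        d j - x j ≤ (⨅ l : Fin n, (d l - x l)) + c} with hE
  set g : ∀ i : Fin n, ({j : Fin n // ¬ j = i} → ℝ) → ℝ :=
    fun i y => d i - ⨅ j : {j : Fin n // ¬ j = i}, (d (j : Fin n) - y j) with hgdef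
  have hgmeas : ∀ i, Measurable (g i) := fun i =>
    measurable_const.sub (Measurable.iInf fun j =>
      measurable_const.sub (measurable_pi_apply j))
  set S : Fin n → Set (Fin n → ℝ) :=
    fun i => {x | g i (fun j => x (j : Fin n)) ≤ x i} with hSdef
  set G : Fin n → Set (Fin n → ℝ) :=
    fun i => {x | g i (fun j => x (j : Fin n)) + c < x i} with hGdef
  -- characterizations
  have hSmem : ∀ i (x : Fin n → ℝ), x ∈ S i ↔ ∀ j, j ≠ i → d i - x i ≤ d j - x j := by
    intro i x
    obtain ⟨j₀, hj₀, hj₀min⟩ :=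
      mpx_ciInf_exists_min (fun j : {j : Fin n // ¬ j = i} => d (j : Fin n) - x (j : Fin n))
    constructor
    · intro hx j hj
      have h1 : d i - x i ≤ d (j₀ : Fin n) - x (j₀ : Fin n) := by
        have := hx
        simp only [hSdef, Set.mem_setOf_eq, hgdef] at this
        rw [hj₀] at this
        linarith
      exact h1.trans (hj₀min ⟨j, hj⟩)
    · intro h
      simp only [hSdef, Set.mem_setOf_eq, hgdef]
      rw [hj₀]
      have := h (j₀ : Fin n) j₀.2
      linarith
  have hGmem : ∀ i (x : Fin n → ℝ), x ∈ G i ↔ ∀ j, j ≠ i → d i - x i + c < d j - x j := by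
    intro i x
    obtain ⟨j₀, hj₀, hj₀min⟩ :=
      mpx_ciInf_exists_min (fun j : {j : Fin n // ¬ j = i} => d (j : Fin n) - x (j : Fin n))
    constructor
    · intro hx j hj
      have h1 : d i - x i + c < d (j₀ : Fin n) - x (j₀ : Fin n) := by
        have := hx
        simp only [hGdef, Set.mem_setOf_eq, hgdef] at this
        rw [hj₀] at this
        linarith
      exact h1.trans_le (hj₀min ⟨j, hj⟩)
    · intro h
      simp only [hGdef, Set.mem_setOf_eq, hgdef]
      rw [hj₀]
      have := h (j₀ : Fin n) j₀.2
      linarith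
  -- measurability
  have hrestr : ∀ i : Fin n, Measurable fun (x : Fin n → ℝ) (j : {j : Fin n // ¬ j = i}) =>
      x (j : Fin n) := fun i => measurable_pi_lambda _ fun j => measurable_pi_apply _
  have hSmeas : ∀ i, MeasurableSet (S i) := fun i =>
    measurableSet_le ((hgmeas i).comp (hrestr i)) (measurable_pi_apply i)
  have hGmeas : ∀ i, MeasurableSet (G i) := fun i =>
    measurableSet_lt (((hgmeas i).comp (hrestr i)).add_const c) (measurable_pi_apply i)
  -- covering
  have hcover : ∀ x : Fin n → ℝ, ∃ i, x ∈ S i := by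
    intro x
    obtain ⟨i₀, hi₀⟩ := Finite.exists_min (fun i : Fin n => d i - x i)
    exact ⟨i₀, (hSmem i₀ x).mpr fun j _ => hi₀ j⟩
  -- disjointness of G
  have hdisj : Pairwise (Function.onFun Disjoint G) := by
    intro i j hij
    rw [Function.onFun, Set.disjoint_left]
    intro x hxi hxj
    have h1 := (hGmem i x).mp hxi j (Ne.symm hij)
    have h2 := (hGmem j x).mp hxj i hij
    linarith
  -- E avoids every G i
  have hEG : E ⊆ (⋃ i, G i)ᶜ := by
    intro x hx
    simp only [Set.mem_compl_iff, Set.mem_iUnion, not_exists]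
    intro i hGi
    obtain ⟨i', j', hij', hi', hj'⟩ := hx
    have hbdd : BddBelow (Set.range fun l : Fin n => d l - x l) :=
      Set.Finite.bddBelow (Set.finite_range _)
    have hmle : (⨅ l : Fin n, (d l - x l)) ≤ d i - x i := ciInf_le hbdd i
    have hk : ∃ k : Fin n, k ≠ i ∧ d k - x k ≤ (⨅ l : Fin n, (d l - x l)) + c := by
      by_cases h : i' = i
      · exact ⟨j', h ▸ (Ne.symm hij'), hj'⟩
      · exact ⟨i', h, hi'⟩
    obtain ⟨k, hki, hkle⟩ := hk
    have := (hGmem i x).mp hGi k hki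
    linarith
  -- Fubini lower bounds
  have hkey : ∀ i, ENNReal.ofReal (Real.exp (-β * c)) * ν (S i) ≤ ν (G i) := by
    intro i
    set BS : Set (ℝ × ({j : Fin n // ¬ j = i} → ℝ)) := {z | g i z.2 ≤ z.1} with hBSdef
    set BG : Set (ℝ × ({j : Fin n // ¬ j = i} → ℝ)) := {z | g i z.2 + c < z.1} with hBGdef
    have hBS : MeasurableSet BS :=
      measurableSet_le ((hgmeas i).comp measurable_snd) measurable_fst
    have hBG : MeasurableSet BG :=
      measurableSet_lt (((hgmeas i).comp measurable_snd).add_const c) measurable_fst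
    have hS_eq : ν (S i) = ∫⁻ y, κ i {t | (t, y) ∈ BS}
        ∂(Measure.pi fun j : {j : Fin n // ¬ j = i} => κ (j : Fin n)) :=
      mpx_fubini κ i BS hBS
    have hG_eq : ν (G i) = ∫⁻ y, κ i {t | (t, y) ∈ BG}
        ∂(Measure.pi fun j : {j : Fin n // ¬ j = i} => κ (j : Fin n)) :=
      mpx_fubini κ i BG hBG
    have hmeasint : Measurable fun y : {j : Fin n // ¬ j = i} → ℝ =>
        κ i {t | (t, y) ∈ BS} := measurable_measure_prodMk_right hBS
    rw [hS_eq, hG_eq, ← MeasureTheory.lintegral_const_mul _ hmeasint]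
    refine lintegral_mono fun y => ?_
    have h := mpx_surv β c hβ hc (κ i) (hIoi i) (g i y)
    have e1 : {t : ℝ | (t, y) ∈ BS} = Set.Ici (g i y) := rfl
    have e2 : {t : ℝ | (t, y) ∈ BG} = Set.Ioi (g i y + c) := rfl
    rw [e1, e2]
    exact h
  -- sum up
  have hlower : ENNReal.ofReal (Real.exp (-β * c)) ≤ ν (⋃ i, G i) := by
    rw [measure_iUnion hdisj hGmeas]
    have h1 : (1 : ℝ≥0∞) ≤ ∑' i, ν (S i) := by
      have hcov : (Set.univ : Set (Fin n → ℝ)) ⊆ ⋃ i, S i := fun x _ =>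
        Set.mem_iUnion.mpr (hcover x)
      calc (1 : ℝ≥0∞) = ν Set.univ := (measure_univ).symm
        _ ≤ ν (⋃ i, S i) := measure_mono hcov
        _ ≤ ∑' i, ν (S i) := measure_iUnion_le _
    calc ENNReal.ofReal (Real.exp (-β * c))
        = ENNReal.ofReal (Real.exp (-β * c)) * 1 := (mul_one _).symm
      _ ≤ ENNReal.ofReal (Real.exp (-β * c)) * ∑' i, ν (S i) := mul_le_mul_right h1 _
      _ = ∑' i, ENNReal.ofReal (Real.exp (-β * c)) * ν (S i) := ENNReal.tsum_mul_left.symm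
      _ ≤ ∑' i, ν (G i) := ENNReal.tsum_le_tsum hkey
  -- finish
  calc ν E ≤ ν (⋃ i, G i)ᶜ := measure_mono hEG
    _ = 1 - ν (⋃ i, G i) := prob_compl_eq_one_sub (MeasurableSet.iUnion hGmeas)
    _ ≤ 1 - ENNReal.ofReal (Real.exp (-β * c)) := tsub_le_tsub_left hlower 1
    _ ≤ ENNReal.ofReal (β * c) := by
        rw [tsub_le_iff_right]
        calc (1 : ℝ≥0∞) = ENNReal.ofReal 1 := ENNReal.ofReal_one.symm
          _ ≤ ENNReal.ofReal (β * c + Real.exp (-β * c)) := by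
              apply ENNReal.ofReal_le_ofReal
              have := Real.add_one_le_exp (-(β * c))
              rw [neg_mul]
              linarith
          _ = ENNReal.ofReal (β * c) + ENNReal.ofReal (Real.exp (-β * c)) :=
              ENNReal.ofReal_add (by positivity) (Real.exp_nonneg _)

theorem mpx_second_smallest {Ω : Type*} [MeasurableSpace Ω]
    (μ : Measure Ω) [IsProbabilityMeasure μ]
    (n : ℕ) (hn : 2 ≤ n) (d : Fin n → ℝ) (β c : ℝ) (hβ : 0 < β) (hc : 0 ≤ c)
    (lam : Fin n → Ω → ℝ) (hmeas : ∀ i, Measurable (lam i))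
    (hindep : iIndepFun lam μ)
    (hexp : ∀ i, ∀ t : ℝ, 0 ≤ t →
      μ {ω | t < lam i ω} = ENNReal.ofReal (Real.exp (-β * t))) :
    μ {ω | ∃ i j : Fin n, i ≠ j ∧
        d i - lam i ω ≤ (⨅ l : Fin n, (d l - lam l ω)) + c ∧
        d j - lam j ω ≤ (⨅ l : Fin n, (d l - lam l ω)) + c} ≤
      ENNReal.ofReal (β * c) := by
  classical
  set κ : Fin n → Measure ℝ := fun i => μ.map (lam i) with hκ
  haveI hpr : ∀ i, IsProbabilityMeasure (κ i) := fun i =>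
    Measure.isProbabilityMeasure_map (hmeas i).aemeasurable
  have hΛ : Measurable (fun ω (i : Fin n) => lam i ω) :=
    measurable_pi_lambda _ hmeas
  have hmap : Measure.pi κ = μ.map (fun ω (i : Fin n) => lam i ω) := by
    refine Measure.pi_eq fun s hs => ?_
    rw [Measure.map_apply hΛ (MeasurableSet.univ_pi hs)]
    have hpre : (fun ω (i : Fin n) => lam i ω) ⁻¹' Set.pi Set.univ s
        = ⋂ i ∈ Finset.univ, lam i ⁻¹' s i := by
      ext ω; simp [Set.mem_pi]
    rw [hpre, hindep.measure_inter_preimage_eq_mul Finset.univ (fun i _ => hs i)]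
    exact Finset.prod_congr rfl fun i _ => (Measure.map_apply (hmeas i) (hs i)).symm
  have hIoi : ∀ i, ∀ t : ℝ, 0 ≤ t → κ i (Set.Ioi t) = ENNReal.ofReal (Real.exp (-β * t)) := by
    intro i t ht
    rw [hκ]
    rw [Measure.map_apply (hmeas i) measurableSet_Ioi]
    exact hexp i t ht
  set Epi : Set (Fin n → ℝ) := {x | ∃ i j : Fin n, i ≠ j ∧
        d i - x i ≤ (⨅ l : Fin n, (d l - x l)) + c ∧
        d j - x j ≤ (⨅ l : Fin n, (d l - x l)) + c} with hEpi
  have hEmeas : MeasurableSet Epi := mpx_E_measurable n d c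
  calc μ {ω | ∃ i j : Fin n, i ≠ j ∧
        d i - lam i ω ≤ (⨅ l : Fin n, (d l - lam l ω)) + c ∧
        d j - lam j ω ≤ (⨅ l : Fin n, (d l - lam l ω)) + c}
      = μ ((fun ω (i : Fin n) => lam i ω) ⁻¹' Epi) := rfl
    _ = (μ.map (fun ω (i : Fin n) => lam i ω)) Epi := (Measure.map_apply hΛ hEmeas).symm
    _ = Measure.pi κ Epi := by rw [← hmap]
    _ ≤ ENNReal.ofReal (β * c) := mpx_pi n hn d β c hβ hc κ hIoi
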